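/- Let n ≥ 4 and z_1, ..., z_n pairwise distinct. With Ã as above, det(Ã) = (-1)^{n-3} · ∏_{1≤j<k≤3} (z_k - z_j)^{-1} · ∏_{l=4}^{n} (∏_{k≠l}(z_l - z_k))^{-1} · ∏_{4≤r<m≤n} (z_m - z_r). -/

import Mathlib

open Finset Matrix Equiv


/-- The matrix `Ã` from Appendix A: first `n-3` columns carry `z_i^{a-1}/∏_{k≠i}(z_i-z_k)`,
last three columns carry the inverse 3×3 Vandermonde rows for `z_1, z_2, z_3`. -/
noncomputable def Atilde (n : ℕ) (hn : 4 ≤ n) (z : Fin n → ℂ) :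
    Matrix (Fin n) (Fin n) ℂ :=
  Matrix.of fun i j =>
    if (j : ℕ) < n - 3 then
      z i ^ (j : ℕ) / ∏ k ∈ Finset.univ.erase i, (z i - z k)
    else
      if (i : ℕ) = 0 then
        (if (j : ℕ) = n - 3 then z ⟨1, by omega⟩ * z ⟨2, by omega⟩
          else if (j : ℕ) = n - 2 then -(z ⟨1, by omega⟩ + z ⟨2, by omega⟩) else 1) /
          ((z ⟨1, by omega⟩ - z ⟨0, by omega⟩) * (z ⟨2, by omega⟩ - z ⟨0, by omega⟩))
      else if (i : ℕ) = 1 then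
        (if (j : ℕ) = n - 3 then z ⟨0, by omega⟩ * z ⟨2, by omega⟩
          else if (j : ℕ) = n - 2 then -(z ⟨0, by omega⟩ + z ⟨2, by omega⟩) else 1) /
          ((z ⟨0, by omega⟩ - z ⟨1, by omega⟩) * (z ⟨2, by omega⟩ - z ⟨1, by omega⟩))
      else if (i : ℕ) = 2 then
        (if (j : ℕ) = n - 3 then z ⟨0, by omega⟩ * z ⟨1, by omega⟩
          else if (j : ℕ) = n - 2 then -(z ⟨0, by omega⟩ + z ⟨1, by omega⟩) else 1) /
          ((z ⟨0, by omega⟩ - z ⟨2, by omega⟩) * (z ⟨1, by omega⟩ - z ⟨2, by omega⟩))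
      else 0

set_option maxHeartbeats 2000000 in
/-- Explicit value of `det Ã`. -/
theorem det_Atilde (n : ℕ) (hn : 4 ≤ n) (z : Fin n → ℂ)
    (hz : Function.Injective z) :
    (Atilde n hn z).det =
      (-1) ^ (n - 3) *
        ((z ⟨1, by omega⟩ - z ⟨0, by omega⟩) * (z ⟨2, by omega⟩ - z ⟨0, by omega⟩) *
            (z ⟨2, by omega⟩ - z ⟨1, by omega⟩))⁻¹ *
        (∏ l ∈ Finset.univ.filter (fun l : Fin n => 3 ≤ (l : ℕ)),
          (∏ k ∈ Finset.univ.erase l, (z l - z k))⁻¹) *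
        ∏ r ∈ Finset.univ.filter (fun r : Fin n => 3 ≤ (r : ℕ)),
          ∏ m ∈ Finset.Ioi r, (z m - z r) := by
  classical
  have h3m : 3 + (n - 3) = n := by omega
  set e : Fin 3 ⊕ Fin (n - 3) ≃ Fin n := finSumFinEquiv.trans (finCongr h3m) with he
  set τ : Equiv.Perm (Fin n) := ((finRotate n) ^ 3)⁻¹ with hτ
  -- value of the rotation
  have hτval : ∀ j : Fin n, ((τ j : ℕ))
      = if (j : ℕ) < 3 then (j : ℕ) + (n - 3) else (j : ℕ) - 3 := by
    rw [hτ]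
    obtain ⟨N, hN⟩ : ∃ N, n = N + 1 := ⟨n - 1, by omega⟩
    subst hN
    have h1 : ((1 : Fin (N+1)) : ℕ) = 1 % (N+1) := rfl
    have h3 : ((3 : Fin (N+1)) : ℕ) = 3 % (N+1) := rfl
    have hrot : ∀ k : Fin (N+1), ((finRotate (N+1)) ^ 3) k = k + 3 := by
      intro k
      apply Fin.ext
      simp only [pow_succ, pow_zero, Equiv.Perm.mul_apply, Equiv.Perm.one_def, Equiv.refl_apply,
        finRotate_succ_apply, Fin.val_add, h1, h3, Nat.mod_add_mod, Nat.add_mod_mod]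
    have hτ' : ∀ j : Fin (N+1), (((finRotate (N+1)) ^ 3)⁻¹ : Equiv.Perm (Fin (N+1))) j = j - 3 := by
      intro j
      rw [Equiv.Perm.inv_def, Equiv.symm_apply_eq, hrot, sub_add_cancel]
    have h3v : ((3 : Fin (N+1)) : ℕ) = 3 := by
      rw [h3, Nat.mod_eq_of_lt (by omega)]
    intro j
    rw [hτ', Fin.sub_def, h3v]
    simp only [Fin.val_mk]
    rcases lt_or_ge ((j : ℕ)) 3 with h | h
    · rw [if_pos h, Nat.mod_eq_of_lt (by omega)]; omega
    · rw [if_neg (by omega), show (N + 1 - 3) + (j : ℕ) = ((j:ℕ) - 3) + 1 * (N+1) by omega,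
        Nat.add_mul_mod_self_right, Nat.mod_eq_of_lt (by omega)]
  have hsign : ((Equiv.Perm.sign τ : ℤ) : ℂ) = (-1) ^ (n - 3) := by
    rw [hτ]
    obtain ⟨N, hN⟩ : ∃ N, n = N + 1 := ⟨n - 1, by omega⟩
    subst hN
    rw [map_inv, map_pow, sign_finRotate]
    rcases Nat.even_or_odd N with h | h
    · have h1 : Even (N - 2) := by rcases h with ⟨t, ht⟩; exact ⟨t - 1, by omega⟩
      simp [h.neg_one_pow, h1.neg_one_pow, Nat.add_sub_cancel]
    · have h1 : Odd (N - 2) := by rcases h with ⟨t, ht⟩; exact ⟨t - 1, by omega⟩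
      simp [h.neg_one_pow, h1.neg_one_pow, Nat.add_sub_cancel]
  -- the blocks
  set B : Matrix (Fin 3) (Fin 3) ℂ :=
    Matrix.of (fun i j : Fin 3 => Atilde n hn z ⟨i, by omega⟩ ⟨n - 3 + j, by omega⟩) with hBdef
  set A : Matrix (Fin 3) (Fin (n - 3)) ℂ :=
    Matrix.of (fun (i : Fin 3) (a : Fin (n - 3)) => Atilde n hn z ⟨i, by omega⟩ ⟨a, by omega⟩)
      with hAdef
  set C : Matrix (Fin (n - 3)) (Fin (n - 3)) ℂ :=
    Matrix.of (fun i a : Fin (n - 3) => Atilde n hn z ⟨3 + i, by omega⟩ ⟨a, by omega⟩) with hCdef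
  have heL : ∀ i : Fin 3, ((e (Sum.inl i) : Fin n) : ℕ) = (i : ℕ) := fun i => rfl
  have heR : ∀ a : Fin (n - 3), ((e (Sum.inr a) : Fin n) : ℕ) = 3 + (a : ℕ) := fun a => rfl
  -- the block decomposition
  have hblock : ((Atilde n hn z).submatrix id τ).submatrix e e = Matrix.fromBlocks B A 0 C := by
    ext x y
    cases x with
    | inl i =>
      cases y with
      | inl j =>
        have hc : τ (e (Sum.inl j)) = (⟨n - 3 + (j : ℕ), by omega⟩ : Fin n) := by
          apply Fin.ext
          rw [hτval, heL, if_pos (by omega)]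
          simp only [Fin.val_mk]
          omega
        have hr : e (Sum.inl i) = (⟨(i : ℕ), by omega⟩ : Fin n) := Fin.ext (heL i)
        simp only [Matrix.submatrix_apply, id_eq, Matrix.fromBlocks_apply₁₁, hr, hc, hBdef,
          Matrix.of_apply]
      | inr a =>
        have hc : τ (e (Sum.inr a)) = (⟨(a : ℕ), by omega⟩ : Fin n) := by
          apply Fin.ext
          rw [hτval, heR, if_neg (by omega)]
          simp only [Fin.val_mk]
          omega
        have hr : e (Sum.inl i) = (⟨(i : ℕ), by omega⟩ : Fin n) := Fin.ext (heL i)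
        simp only [Matrix.submatrix_apply, id_eq, Matrix.fromBlocks_apply₁₂, hr, hc, hAdef,
          Matrix.of_apply]
    | inr i =>
      cases y with
      | inl j =>
        have hc : τ (e (Sum.inl j)) = (⟨n - 3 + (j : ℕ), by omega⟩ : Fin n) := by
          apply Fin.ext
          rw [hτval, heL, if_pos (by omega)]
          simp only [Fin.val_mk]
          omega
        have hr : e (Sum.inr i) = (⟨3 + (i : ℕ), by omega⟩ : Fin n) := Fin.ext (heR i)
        simp only [Matrix.submatrix_apply, id_eq, Matrix.fromBlocks_apply₂₁, hr, hc,
          Matrix.zero_apply]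
        simp only [Atilde, Matrix.of_apply, Fin.val_mk]
        rw [if_neg (by omega), if_neg (by omega), if_neg (by omega), if_neg (by omega)]
      | inr a =>
        have hc : τ (e (Sum.inr a)) = (⟨(a : ℕ), by omega⟩ : Fin n) := by
          apply Fin.ext
          rw [hτval, heR, if_neg (by omega)]
          simp only [Fin.val_mk]
          omega
        have hr : e (Sum.inr i) = (⟨3 + (i : ℕ), by omega⟩ : Fin n) := Fin.ext (heR i)
        simp only [Matrix.submatrix_apply, id_eq, Matrix.fromBlocks_apply₂₂, hr, hc, hCdef,
          Matrix.of_apply]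
  -- determinant via the block decomposition
  have hdet1 : ((Equiv.Perm.sign τ : ℤ) : ℂ) * (Atilde n hn z).det = B.det * C.det := by
    have h1 := congrArg Matrix.det hblock
    rw [Matrix.det_submatrix_equiv_self, Matrix.det_permute',
      Matrix.det_fromBlocks_zero₂₁] at h1
    exact_mod_cast h1
  have hs2 : ((Equiv.Perm.sign τ : ℤ) : ℂ) * ((Equiv.Perm.sign τ : ℤ) : ℂ) = 1 := by
    rcases Int.units_eq_one_or (Equiv.Perm.sign τ) with h | h <;> rw [h] <;> norm_num
  have hdet2 : (Atilde n hn z).det = ((Equiv.Perm.sign τ : ℤ) : ℂ) * (B.det * C.det) := by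
    rw [← hdet1, ← mul_assoc, hs2, one_mul]
  -- determinant of B
  have h10 : z ⟨1, by omega⟩ - z ⟨0, by omega⟩ ≠ 0 :=
    sub_ne_zero.mpr fun h => by simpa [Fin.ext_iff] using hz h
  have h20 : z ⟨2, by omega⟩ - z ⟨0, by omega⟩ ≠ 0 :=
    sub_ne_zero.mpr fun h => by simpa [Fin.ext_iff] using hz h
  have h21 : z ⟨2, by omega⟩ - z ⟨1, by omega⟩ ≠ 0 :=
    sub_ne_zero.mpr fun h => by simpa [Fin.ext_iff] using hz h
  have h01 : z ⟨0, by omega⟩ - z ⟨1, by omega⟩ ≠ 0 :=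
    sub_ne_zero.mpr fun h => by simpa [Fin.ext_iff] using hz h
  have h02 : z ⟨0, by omega⟩ - z ⟨2, by omega⟩ ≠ 0 :=
    sub_ne_zero.mpr fun h => by simpa [Fin.ext_iff] using hz h
  have h12 : z ⟨1, by omega⟩ - z ⟨2, by omega⟩ ≠ 0 :=
    sub_ne_zero.mpr fun h => by simpa [Fin.ext_iff] using hz h
  have hBval : B.det = ((z ⟨1, by omega⟩ - z ⟨0, by omega⟩) * (z ⟨2, by omega⟩ - z ⟨0, by omega⟩) *
      (z ⟨2, by omega⟩ - z ⟨1, by omega⟩))⁻¹ := by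
    have hB : B = Matrix.of (fun i j =>
        (![((z ⟨1, by omega⟩ - z ⟨0, by omega⟩) * (z ⟨2, by omega⟩ - z ⟨0, by omega⟩))⁻¹,
           ((z ⟨0, by omega⟩ - z ⟨1, by omega⟩) * (z ⟨2, by omega⟩ - z ⟨1, by omega⟩))⁻¹,
           ((z ⟨0, by omega⟩ - z ⟨2, by omega⟩) * (z ⟨1, by omega⟩ - z ⟨2, by omega⟩))⁻¹] i) *
        (!![z ⟨1, by omega⟩ * z ⟨2, by omega⟩, -(z ⟨1, by omega⟩ + z ⟨2, by omega⟩), 1;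
            z ⟨0, by omega⟩ * z ⟨2, by omega⟩, -(z ⟨0, by omega⟩ + z ⟨2, by omega⟩), 1;
            z ⟨0, by omega⟩ * z ⟨1, by omega⟩, -(z ⟨0, by omega⟩ + z ⟨1, by omega⟩), 1] i j)) := by
      rw [hBdef]
      ext i j
      fin_cases i <;> fin_cases j <;>
        simp [Atilde, show n-3+1 = n-2 from by omega, show n-3+2 = n-1 from by omega,
          show ¬(n-2 < n-3) from by omega, show ¬(n-1 < n-3) from by omega,
          show n-2 ≠ n-3 from by omega, show n-1 ≠ n-3 from by omega,
          show n-1 ≠ n-2 from by omega] <;>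
        (field_simp [h10, h20, h21, h01, h02, h12]; try ring; try tauto)
    rw [hB, Matrix.det_mul_column, Matrix.det_fin_three]
    norm_num [Fin.prod_univ_three, Matrix.vecHead, Matrix.vecTail, Matrix.cons_val_zero,
      Matrix.cons_val_one, Matrix.cons_val_two, Matrix.cons_val]
    field_simp
    ring
  -- determinant of C
  have hCval : C.det =
      (∏ i : Fin (n - 3),
        (∏ k ∈ Finset.univ.erase (⟨3 + (i : ℕ), by omega⟩ : Fin n),
          (z ⟨3 + (i : ℕ), by omega⟩ - z k))⁻¹) *
      ∏ i : Fin (n - 3), ∏ j ∈ Finset.Ioi i,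
        (z ⟨3 + (j : ℕ), by omega⟩ - z ⟨3 + (i : ℕ), by omega⟩) := by
    have hC : C = Matrix.of (fun i a =>
        (fun i : Fin (n - 3) => (∏ k ∈ Finset.univ.erase (⟨3 + (i : ℕ), by omega⟩ : Fin n),
          (z ⟨3 + (i : ℕ), by omega⟩ - z k))⁻¹) i *
        (Matrix.vandermonde (fun i : Fin (n - 3) => z ⟨3 + (i : ℕ), by omega⟩)) i a) := by
      rw [hCdef]
      ext i a
      simp only [Matrix.of_apply, Atilde, Matrix.vandermonde_apply]
      rw [if_pos (by simpa using a.isLt)]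
      rw [div_eq_mul_inv, mul_comm]
    rw [hC, Matrix.det_mul_column, Matrix.det_vandermonde]
  -- reindexing the products
  have hprod1 : ∀ g : Fin n → ℂ,
      ∏ l ∈ Finset.univ.filter (fun l : Fin n => 3 ≤ (l : ℕ)), g l
        = ∏ i : Fin (n - 3), g ⟨3 + (i : ℕ), by omega⟩ := by
    intro g
    refine Finset.prod_nbij' (fun l => ⟨(l : ℕ) - 3, by omega⟩)
      (fun i => (⟨3 + (i : ℕ), by omega⟩ : Fin n)) ?_ ?_ ?_ ?_ ?_
    · intro a _; exact Finset.mem_univ _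
    · intro a _
      simp only [Finset.mem_filter, Finset.mem_univ, true_and, Fin.val_mk]
      omega
    · intro a ha
      simp only [Finset.mem_filter] at ha
      apply Fin.ext
      simp only [Fin.val_mk]
      omega
    · intro a _
      apply Fin.ext
      simp only [Fin.val_mk]
      omega
    · intro a ha
      simp only [Finset.mem_filter] at ha
      congr 1
      apply Fin.ext
      simp only [Fin.val_mk]
      omega
  have hIoi : ∀ i : Fin (n - 3),
      ∏ m' ∈ Finset.Ioi (⟨3 + (i : ℕ), by omega⟩ : Fin n), (z m' - z ⟨3 + (i : ℕ), by omega⟩)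
        = ∏ j ∈ Finset.Ioi i, (z ⟨3 + (j : ℕ), by omega⟩ - z ⟨3 + (i : ℕ), by omega⟩) := by
    intro i
    refine Finset.prod_nbij' (fun l => ⟨(l : ℕ) - 3, by omega⟩)
      (fun j => (⟨3 + (j : ℕ), by omega⟩ : Fin n)) ?_ ?_ ?_ ?_ ?_
    · intro a ha
      simp only [Finset.mem_Ioi, Fin.lt_def, Fin.val_mk] at ha ⊢
      omega
    · intro a ha
      simp only [Finset.mem_Ioi, Fin.lt_def, Fin.val_mk] at ha ⊢
      omega
    · intro a ha
      simp only [Finset.mem_Ioi, Fin.lt_def, Fin.val_mk] at ha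
      apply Fin.ext
      simp only [Fin.val_mk]
      omega
    · intro a _
      apply Fin.ext
      simp only [Fin.val_mk]
      omega
    · intro a ha
      simp only [Finset.mem_Ioi, Fin.lt_def, Fin.val_mk] at ha
      have h' : (⟨3 + ((⟨(a : ℕ) - 3, by omega⟩ : Fin (n - 3)) : ℕ), by omega⟩ : Fin n) = a :=
        Fin.ext (by simp only [Fin.val_mk]; omega)
      rw [h']
  rw [hdet2, hBval, hCval, hsign,
    hprod1 (fun l => (∏ k ∈ Finset.univ.erase l, (z l - z k))⁻¹),
    hprod1 (fun r => ∏ m' ∈ Finset.Ioi r, (z m' - z r))]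
  rw [Finset.prod_congr rfl (fun i _ => hIoi i)]
  ring
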